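/- Let P₁ ⊆ {0,1}* be a maximal prefix code over the two-letter alphabet {0,1}, and let P₂ = { p ∈ {0,1}* : p is a strict prefix of some element of P₁ }. Then P = P₁ ∪ P₂# is a maximal prefix code over the three-letter alphabet {0,1,#}. -/

import Mathlib

/-- The three-letter alphabet {0,1,#}. -/
inductive Alph3 : Type
  | b0 | b1 | hash
  deriving DecidableEq

/-- A prefix code: no element is a strict prefix of another element. -/
def PrefixCode {α : Type*} (C : Set (List α)) : Prop :=
  ∀ u ∈ C, ∀ v ∈ C, u <+: v → u = v

/-- A maximal prefix code among sets of words contained in `W`: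
a prefix code `C ⊆ W` that is not a strict subset of any prefix code `⊆ W`. -/
def MaxPrefixCodeOn {α : Type*} (W C : Set (List α)) : Prop :=
  C ⊆ W ∧ PrefixCode C ∧
    ∀ D : Set (List α), D ⊆ W → PrefixCode D → C ⊆ D → D = C

/-- A maximal prefix code over the full alphabet. -/
def MaxPrefixCode {α : Type*} (C : Set (List α)) : Prop :=
  MaxPrefixCodeOn Set.univ C

/-- {0,1}* : the words over the sub-alphabet {0,1} (no # occurs). -/
def BitWords : Set (List Alph3) := {w | Alph3.hash ∉ w}

/-- {0,1}*# : the words v# with v ∈ {0,1}*. -/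
def HashedWords : Set (List Alph3) := {w | ∃ v ∈ BitWords, w = v ++ [Alph3.hash]}

private lemma prefix_concat_cases {α : Type*} {u p : List α} {a : α}
    (h : u <+: p ++ [a]) : u <+: p ∨ u = p ++ [a] := by
  rcases Nat.lt_or_ge u.length (p.length + 1) with hl | hl
  · exact .inl (List.prefix_of_prefix_length_le h (List.prefix_append p [a]) (by omega))
  · right
    exact h.eq_of_length (by have := h.length_le; simp at this ⊢; omega)

theorem statement1 (P₁ : Set (List Alph3)) (hP₁ : MaxPrefixCodeOn BitWords P₁) :
    MaxPrefixCode
      (P₁ ∪ (fun p => p ++ [Alph3.hash]) ''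
        {p : List Alph3 | ∃ q ∈ P₁, p <+: q ∧ p ≠ q}) := by
  obtain ⟨hsub, hpc, hmax⟩ := hP₁
  have hbit : ∀ u ∈ P₁, Alph3.hash ∉ u := fun u hu => hsub hu
  have hbit2 : ∀ p, (∃ q ∈ P₁, p <+: q ∧ p ≠ q) → Alph3.hash ∉ p := by
    rintro p ⟨q, hq, hpq, -⟩ hp
    exact hbit q hq (hpq.sublist.subset hp)
  refine ⟨fun _ _ => trivial, ?_, ?_⟩
  · -- prefix code
    rintro u hu v hv huv
    rcases hu with hu | ⟨p, hp, rfl⟩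
    · rcases hv with hv | ⟨p, hp, rfl⟩
      · exact hpc u hu v hv huv
      · exfalso
        obtain ⟨q, hq, hpq, hne⟩ := hp
        rcases prefix_concat_cases huv with hup | rfl
        · have huq : u <+: q := hup.trans hpq
          have : u = q := hpc u hu q hq huq
          subst this
          exact hne ((hup.eq_of_length (le_antisymm hup.length_le hpq.length_le)).symm)
        · exact hbit _ hu (by simp)
    · rcases hv with hv | ⟨p', hp', rfl⟩
      · exact absurd (huv.sublist.subset (by simp)) (hbit v hv)
      · rcases prefix_concat_cases huv with hup | heq
        · exact absurd (hup.sublist.subset (by simp)) (hbit2 p' hp')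
        · exact heq
  · -- maximality
    intro D _ hD hPD
    refine Set.eq_of_subset_of_subset ?_ hPD
    intro w hw
    by_cases hhash : Alph3.hash ∈ w
    · set p := w.takeWhile (fun a => a ≠ Alph3.hash) with hpdef
      set t := w.dropWhile (fun a => a ≠ Alph3.hash) with htdef
      have hsplit : p ++ t = w := List.takeWhile_append_dropWhile
      have hhp : Alph3.hash ∉ p := by
        intro hmem
        have := List.mem_takeWhile_imp hmem
        simp at this
      have htne : t ≠ [] := by
        intro h0
        rw [h0, List.append_nil] at hsplit
        exact hhp (hsplit ▸ hhash)
      have hhead : t.head htne = Alph3.hash := by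
        have h := List.head_dropWhile_not (fun a => decide (a ≠ Alph3.hash)) (l := w)
          (by rw [← htdef]; exact htne)
        simp only [decide_eq_false_iff_not, not_not, ← htdef] at h
        exact h
      have hsplit2 : w = p ++ Alph3.hash :: t.tail := by
        rw [← hsplit]
        congr 1
        rw [← hhead]
        exact (List.cons_head_tail htne).symm
      by_cases hqp : ∃ q ∈ P₁, q <+: p
      · exfalso
        obtain ⟨q, hq, hqp⟩ := hqp
        have hqw : q <+: w := hqp.trans ⟨t, hsplit⟩
        have : q = w := hD q (hPD (Or.inl hq)) w hw hqw
        exact hbit q hq (this ▸ hhash)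
      · have hpP₂ : ∃ q ∈ P₁, p <+: q ∧ p ≠ q := by
          by_contra hnp
          have hpc' : PrefixCode (insert p P₁) := by
            rintro u (rfl | hu) v hv huv
            · rcases hv with rfl | hv
              · rfl
              · by_contra hne
                exact hnp ⟨v, hv, huv, hne⟩
            · rcases hv with rfl | hv
              · exact absurd ⟨u, hu, huv⟩ hqp
              · exact hpc u hu v hv huv
          have hsub' : insert p P₁ ⊆ BitWords := by
            rintro x (rfl | hx)
            · exact hhp
            · exact hsub hx
          have := hmax (insert p P₁) hsub' hpc' (Set.subset_insert _ _)
          have hpP₁ : p ∈ P₁ := this ▸ Set.mem_insert p P₁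
          exact hqp ⟨p, hpP₁, List.prefix_refl p⟩
        have hmem : p ++ [Alph3.hash] ∈ D := hPD (Or.inr ⟨p, hpP₂, rfl⟩)
        have hpre : p ++ [Alph3.hash] <+: w := ⟨t.tail, by rw [hsplit2]; simp⟩
        have heq := hD _ hmem w hw hpre
        exact Or.inr ⟨p, hpP₂, heq⟩
    · have hsubD : insert w P₁ ⊆ D := by
        rintro x (rfl | hx)
        · exact hw
        · exact hPD (Or.inl hx)
      have hpc' : PrefixCode (insert w P₁) :=
        fun u hu v hv huv => hD u (hsubD hu) v (hsubD hv) huv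
      have hsub' : insert w P₁ ⊆ BitWords := by
        rintro x (rfl | hx)
        · exact hhash
        · exact hsub hx
      have := hmax (insert w P₁) hsub' hpc' (Set.subset_insert _ _)
      exact Or.inl (this ▸ Set.mem_insert w P₁)
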